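/- In the exploding change-point model (with g ≺ f_0 and f_m ≺ f_{m+1} in MLR order for all m, and continuous log-likelihood ratios x ↦ log(f_m(x)/g(x))), under the measure P_1 (so X_i has density f_{i-1} for all i), for every fixed n ≥ 1 and real c, the map k ↦ P_1( Σ_{i=k}^{k+n} log( f_{i-k}(X_i) / g(X_i) ) ≤ c ) is nonincreasing in k ≥ 1; in particular the supremum over k ≥ 1 is attained at k = 1. -/

import Mathlib

open MeasureTheory ProbabilityTheory

/-- A real random variable `X` has probability density `f` (w.r.t. Lebesgue). -/
def HasDensity {Ω : Type*} [MeasurableSpace Ω] (X : Ω → ℝ) (P : Measure Ω)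
    (f : ℝ → ℝ) : Prop :=
  Measure.map X P = volume.withDensity (fun x => ENNReal.ofReal (f x))

namespace ChgPtAux

/-- One-dimensional comparison: if `p ≺ q` in MLR order, then `q` puts less mass
than `p` on any lower set. -/
lemma onedim_le {p q : ℝ → ℝ} (hpm : Measurable p) (hqm : Measurable q)
    (hp0 : ∀ x, 0 ≤ p x) (hq0 : ∀ x, 0 ≤ q x)
    (hpi : ∫⁻ x, ENNReal.ofReal (p x) = 1) (hqi : ∫⁻ x, ENNReal.ofReal (q x) = 1)
    (hmlr : ∀ x y : ℝ, x ≤ y → p y * q x ≤ p x * q y)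
    {L : Set ℝ} (hL : MeasurableSet L) (hlow : ∀ ⦃a b : ℝ⦄, a ≤ b → b ∈ L → a ∈ L) :
    ∫⁻ x in L, ENNReal.ofReal (q x) ≤ ∫⁻ x in L, ENNReal.ofReal (p x) := by
  set p' : ℝ → ENNReal := fun x => ENNReal.ofReal (p x) with hp'def
  set q' : ℝ → ENNReal := fun x => ENNReal.ofReal (q x) with hq'def
  have hp'm : Measurable p' := ENNReal.measurable_ofReal.comp hpm
  have hq'm : Measurable q' := ENNReal.measurable_ofReal.comp hqm
  set A := ∫⁻ x in L, p' x with hA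
  set B := ∫⁻ x in L, q' x with hB
  set A' := ∫⁻ x in Lᶜ, p' x with hA'
  set B' := ∫⁻ x in Lᶜ, q' x with hB'
  have hAA' : A + A' = 1 := (lintegral_add_compl p' hL).trans hpi
  have hBB' : B + B' = 1 := (lintegral_add_compl q' hL).trans hqi
  have key : A' * B ≤ B' * A := by
    have h1 : ∫⁻ y in Lᶜ, p' y * B = A' * B := lintegral_mul_const B hp'm
    have h2 : ∫⁻ y in Lᶜ, q' y * A = B' * A := lintegral_mul_const A hq'm
    rw [← h1, ← h2]
    refine setLIntegral_mono (hq'm.mul_const A) fun y hy => ?_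
    have hB1 : p' y * B = ∫⁻ x in L, p' y * q' x := (lintegral_const_mul (p' y) hq'm).symm
    have hA1 : q' y * A = ∫⁻ x in L, q' y * p' x := (lintegral_const_mul (q' y) hp'm).symm
    rw [hB1, hA1]
    refine setLIntegral_mono (measurable_const.mul hp'm) fun x hx => ?_
    have hxy : x ≤ y := le_of_not_gt fun h => hy (hlow h.le hx)
    calc p' y * q' x = ENNReal.ofReal (p y * q x) := by
          rw [ENNReal.ofReal_mul (hp0 y)]
      _ ≤ ENNReal.ofReal (p x * q y) := ENNReal.ofReal_le_ofReal (hmlr x y hxy)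
      _ = q' y * p' x := by rw [ENNReal.ofReal_mul (hp0 x), mul_comm]
  calc B = B * (A + A') := by rw [hAA', mul_one]
    _ = B * A + B * A' := mul_add _ _ _
    _ ≤ B * A + B' * A := by
        refine add_le_add_right ?_ _
        rw [mul_comm B A']
        exact key
    _ = (B + B') * A := (add_mul _ _ _).symm
    _ = A := by rw [hBB', one_mul]

lemma wd_prob {w : ℝ → ℝ} (h : ∫⁻ x, ENNReal.ofReal (w x) = 1) :
    IsProbabilityMeasure (volume.withDensity fun x => ENNReal.ofReal (w x)) := by
  constructor
  rw [withDensity_apply _ MeasurableSet.univ, Measure.restrict_univ]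
  exact h

/-- Change one coordinate of a product measure: the lower-set probability decreases. -/
lemma pi_step_le {N : ℕ} (u v : Fin (N + 1) → ℝ → ℝ)
    (hum : ∀ i, Measurable (u i)) (hvm : ∀ i, Measurable (v i))
    (hu0 : ∀ i x, 0 ≤ u i x) (hv0 : ∀ i x, 0 ≤ v i x)
    (hui : ∀ i, ∫⁻ x, ENNReal.ofReal (u i x) = 1)
    (hvi : ∀ i, ∫⁻ x, ENNReal.ofReal (v i x) = 1)
    (i₀ : Fin (N + 1)) (heq : ∀ i, i ≠ i₀ → u i = v i)
    (hmlr : ∀ x y : ℝ, x ≤ y → u i₀ y * v i₀ x ≤ u i₀ x * v i₀ y)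
    {E : Set (Fin (N + 1) → ℝ)} (hE : MeasurableSet E)
    (hlow : ∀ x ∈ E, ∀ y : Fin (N + 1) → ℝ, (∀ i, y i ≤ x i) → y ∈ E) :
    Measure.pi (fun i => volume.withDensity fun x => ENNReal.ofReal (v i x)) E ≤
      Measure.pi (fun i => volume.withDensity fun x => ENNReal.ofReal (u i x)) E := by
  set μ : Fin (N + 1) → Measure ℝ :=
    fun i => volume.withDensity fun x => ENNReal.ofReal (u i x) with hμdef
  set ν : Fin (N + 1) → Measure ℝ :=
    fun i => volume.withDensity fun x => ENNReal.ofReal (v i x) with hνdef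
  haveI : ∀ i, IsProbabilityMeasure (μ i) := fun i => wd_prob (hui i)
  haveI : ∀ i, IsProbabilityMeasure (ν i) := fun i => wd_prob (hvi i)
  set e := MeasurableEquiv.piFinSuccAbove (fun _ : Fin (N + 1) => ℝ) i₀ with hedef
  set S := e.symm ⁻¹' E with hSdef
  have hSm : MeasurableSet S := e.symm.measurable hE
  have hpre : e ⁻¹' S = E := by
    rw [hSdef, Set.preimage_preimage]
    simp only [MeasurableEquiv.symm_apply_apply, Set.preimage_id']
  have hrest : (fun j : Fin N => ν (i₀.succAbove j)) = fun j => μ (i₀.succAbove j) := by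
    funext j
    rw [hμdef, hνdef]
    simp only
    rw [heq _ (Fin.succAbove_ne i₀ j)]
  have h1 : Measure.pi μ E =
      (μ i₀).prod (Measure.pi fun j => μ (i₀.succAbove j)) S := by
    rw [← hpre]
    exact (measurePreserving_piFinSuccAbove μ i₀).measure_preimage hSm.nullMeasurableSet
  have h2 : Measure.pi ν E =
      (ν i₀).prod (Measure.pi fun j => μ (i₀.succAbove j)) S := by
    rw [← hpre]
    have := (measurePreserving_piFinSuccAbove ν i₀).measure_preimage hSm.nullMeasurableSet
    rwa [hrest] at this
  rw [h1, h2, Measure.prod_apply_symm hSm, Measure.prod_apply_symm hSm]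
  refine lintegral_mono fun y => ?_
  -- slice
  set L : Set ℝ := (fun x => (x, y)) ⁻¹' S with hLdef
  have hLm : MeasurableSet L := measurable_prodMk_right hSm
  have hmemL : ∀ x : ℝ, x ∈ L ↔ i₀.insertNth x y ∈ E := by
    intro x
    simp only [hLdef, hSdef, Set.mem_preimage, hedef]
    rw [show (MeasurableEquiv.piFinSuccAbove (fun _ : Fin (N + 1) => ℝ) i₀).symm (x, y)
        = i₀.insertNth x y from rfl]
  have hLlow : ∀ ⦃a b : ℝ⦄, a ≤ b → b ∈ L → a ∈ L := by
    intro a b hab hb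
    rw [hmemL] at hb ⊢
    refine hlow _ hb _ ?_
    intro i
    refine Fin.succAboveCases i₀ ?_ ?_ i
    · simp only [Fin.insertNth_apply_same]; exact hab
    · intro j; simp only [Fin.insertNth_apply_succAbove]; exact le_rfl
  show ν i₀ L ≤ μ i₀ L
  rw [hμdef, hνdef]
  simp only
  rw [withDensity_apply _ hLm, withDensity_apply _ hLm]
  exact onedim_le (hum i₀) (hvm i₀) (hu0 i₀) (hv0 i₀) (hui i₀) (hvi i₀) hmlr hLm hLlow

/-- Full product comparison: coordinatewise MLR implies lower-set probability decreases. -/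
lemma pi_le {N : ℕ} (p q : Fin (N + 1) → ℝ → ℝ)
    (hpm : ∀ i, Measurable (p i)) (hqm : ∀ i, Measurable (q i))
    (hp0 : ∀ i x, 0 ≤ p i x) (hq0 : ∀ i x, 0 ≤ q i x)
    (hpi : ∀ i, ∫⁻ x, ENNReal.ofReal (p i x) = 1)
    (hqi : ∀ i, ∫⁻ x, ENNReal.ofReal (q i x) = 1)
    (hmlr : ∀ (i : Fin (N + 1)) (x y : ℝ), x ≤ y → p i y * q i x ≤ p i x * q i y)
    {E : Set (Fin (N + 1) → ℝ)} (hE : MeasurableSet E)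
    (hlow : ∀ x ∈ E, ∀ y : Fin (N + 1) → ℝ, (∀ i, y i ≤ x i) → y ∈ E) :
    Measure.pi (fun i => volume.withDensity fun x => ENNReal.ofReal (q i x)) E ≤
      Measure.pi (fun i => volume.withDensity fun x => ENNReal.ofReal (p i x)) E := by
  classical
  set h : ℕ → Fin (N + 1) → ℝ → ℝ := fun k i => if (i : ℕ) < k then q i else p i with hdef
  have hhm : ∀ k i, Measurable (h k i) := by
    intro k i; by_cases hik : (i : ℕ) < k <;> simp [hdef, hik] <;> [exact hqm i; exact hpm i]
  have hh0 : ∀ k i x, 0 ≤ h k i x := by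
    intro k i x; by_cases hik : (i : ℕ) < k <;> simp [hdef, hik] <;>
      [exact hq0 i x; exact hp0 i x]
  have hhi : ∀ k i, ∫⁻ x, ENNReal.ofReal (h k i x) = 1 := by
    intro k i; by_cases hik : (i : ℕ) < k <;> simp [hdef, hik] <;>
      [exact hqi i; exact hpi i]
  have main : ∀ k : ℕ,
      Measure.pi (fun i => volume.withDensity fun x => ENNReal.ofReal (h k i x)) E ≤
        Measure.pi (fun i => volume.withDensity fun x => ENNReal.ofReal (p i x)) E := by
    intro k
    induction k with
    | zero =>
      have : (fun i : Fin (N + 1) => (fun x => ENNReal.ofReal (h 0 i x))) =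
          fun i => fun x => ENNReal.ofReal (p i x) := by
        funext i x; simp [hdef]
      rw [show (fun i : Fin (N+1) => volume.withDensity fun x => ENNReal.ofReal (h 0 i x)) =
          (fun i => volume.withDensity fun x => ENNReal.ofReal (p i x)) from by
        funext i; simp [hdef]]
    | succ k ih =>
      by_cases hk : k < N + 1
      · refine le_trans ?_ ih
        refine pi_step_le (h k) (h (k + 1)) (hhm k) (hhm (k + 1)) (hh0 k) (hh0 (k + 1))
          (hhi k) (hhi (k + 1)) ⟨k, hk⟩ ?_ ?_ hE hlow
        · intro i hi
          have : (i : ℕ) ≠ k := fun hik => hi (Fin.ext hik)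
          by_cases h1 : (i : ℕ) < k
          · simp [hdef, h1, Nat.lt_succ_of_lt h1]
          · have h2 : ¬ (i : ℕ) < k + 1 := by omega
            simp [hdef, h1, h2]
        · intro x y hxy
          have e1 : h k ⟨k, hk⟩ = p ⟨k, hk⟩ := by simp [hdef]
          have e2 : h (k + 1) ⟨k, hk⟩ = q ⟨k, hk⟩ := by simp [hdef]
          rw [e1, e2]
          exact hmlr ⟨k, hk⟩ x y hxy
      · have : h (k + 1) = h k := by
          funext i x
          have h1 : (i : ℕ) < k := by omega
          simp [hdef, h1, Nat.lt_succ_of_lt h1]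
        rw [this]; exact ih
  have hfin : (fun i : Fin (N + 1) => volume.withDensity fun x =>
      ENNReal.ofReal (h (N + 1) i x)) =
      fun i => volume.withDensity fun x => ENNReal.ofReal (q i x) := by
    funext i
    have : (i : ℕ) < N + 1 := i.isLt
    simp [hdef, this]
  have := main (N + 1)
  rwa [hfin] at this

end ChgPtAux

/-- In the exploding change-point model (`g ≺ f 0 ≺ f 1 ≺ ...` in MLR order,
continuous log-likelihood ratios), under `P_1` (here `X j`, the observation at time
`j + 1`, has density `f j`, and the observations are independent), the map
`k ↦ P_1(Σ_{i=k}^{k+n} log(f_{i-k}(X_i)/g(X_i)) ≤ c)` is nonincreasing in `k ≥ 1`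
(below `κ = k - 1`), and in particular its supremum over `k ≥ 1` is attained at
`k = 1` (i.e. `κ = 0`). -/
theorem prob_sum_llr_le_antitone_in_changepoint
    {Ω : Type*} [MeasurableSpace Ω] (P : Measure Ω) [IsProbabilityMeasure P]
    (X : ℕ → Ω → ℝ) (f : ℕ → ℝ → ℝ) (g : ℝ → ℝ)
    (hX_meas : ∀ j, Measurable (X j))
    (hf_meas : ∀ m, Measurable (f m)) (hg_meas : Measurable g)
    (hf_nonneg : ∀ m x, 0 ≤ f m x) (hg_nonneg : ∀ x, 0 ≤ g x)
    (hf_int : ∀ m, ∫ x, f m x = 1) (hg_int : ∫ x, g x = 1)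
    (hMLR0 : ∀ x y : ℝ, x ≤ y → g y * f 0 x ≤ g x * f 0 y)
    (hMLR : ∀ (m : ℕ) (x y : ℝ), x ≤ y → f m y * f (m + 1) x ≤ f m x * f (m + 1) y)
    (hcont : ∀ m : ℕ, Continuous fun x => Real.log (f m x / g x))
    (hindep : iIndepFun X P)
    (hdens : ∀ j : ℕ, HasDensity (X j) P (f j)) :
    ∀ (n : ℕ), 1 ≤ n → ∀ (c : ℝ),
      (Antitone fun κ : ℕ =>
        P {ω | ∑ j ∈ Finset.range (n + 1),
            Real.log (f j (X (κ + j) ω) / g (X (κ + j) ω)) ≤ c})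
      ∧
      (⨆ κ : ℕ,
          P {ω | ∑ j ∈ Finset.range (n + 1),
              Real.log (f j (X (κ + j) ω) / g (X (κ + j) ω)) ≤ c})
        = P {ω | ∑ j ∈ Finset.range (n + 1),
            Real.log (f j (X j ω) / g (X j ω)) ≤ c} := by
  classical
  -- existence of points of positivity
  have exists_pos : ∀ (w : ℝ → ℝ), (∀ x, 0 ≤ w x) → (∫ x, w x) = 1 → ∃ z, 0 < w z := by
    intro w h0 hI
    by_contra h
    push_neg at h
    have : w = fun _ => 0 := funext fun z => le_antisymm (h z) (h0 z)
    rw [this] at hI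
    simp at hI
  -- vanish lemma: if `f j` vanishes on `[x, ∞)`, so does `g`
  have vanish : ∀ (j : ℕ) (x : ℝ), (∀ y, x ≤ y → f j y = 0) → ∀ y, x ≤ y → g y = 0 := by
    intro j
    induction j with
    | zero =>
      intro x h y hxy
      obtain ⟨z, hz⟩ := exists_pos (f 0) (hf_nonneg 0) (hf_int 0)
      have hzx : z < x := by
        by_contra hc
        push_neg at hc
        rw [h z hc] at hz
        exact lt_irrefl _ hz
      have hzy : z ≤ y := le_trans hzx.le hxy
      have hm := hMLR0 z y hzy
      rw [h y hxy] at hm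
      nlinarith [hg_nonneg y]
    | succ j ih =>
      intro x h y hxy
      refine ih x ?_ y hxy
      intro y' hy'
      obtain ⟨z, hz⟩ := exists_pos (f (j + 1)) (hf_nonneg (j + 1)) (hf_int (j + 1))
      have hzx : z < x := by
        by_contra hc
        push_neg at hc
        rw [h z hc] at hz
        exact lt_irrefl _ hz
      have hm := hMLR j z y' (le_trans hzx.le hy')
      rw [h y' hy'] at hm
      nlinarith [hf_nonneg j y']
  -- positivity descends the chain
  have pos_step : ∀ (j : ℕ) (x : ℝ), 0 < g x → 0 < f (j + 1) x → 0 < f j x := by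
    intro j x hg hfs
    rcases (hf_nonneg j x).lt_or_eq with h | h
    · exact h
    exfalso
    have hv : ∀ y, x ≤ y → f j y = 0 := by
      intro y hy
      have hm := hMLR j x y hy
      rw [← h] at hm
      have h2 : f j y ≤ 0 := by nlinarith [hf_nonneg j y]
      exact le_antisymm h2 (hf_nonneg j y)
    have := vanish j x hv x le_rfl
    linarith
  have pos_chain : ∀ (d j : ℕ) (x : ℝ), 0 < g x → 0 < f (j + d) x → 0 < f j x := by
    intro d
    induction d with
    | zero => intro j x _ h; exact h
    | succ d ih =>
      intro j x hg h
      exact ih j x hg (pos_step (j + d) x hg h)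
  -- ratio monotonicity on the positivity set
  have ratio_mono : ∀ (m : ℕ) (x y : ℝ), x ≤ y → 0 < g x → 0 < f m x → 0 < g y →
      0 < f m y → f m x / g x ≤ f m y / g y := by
    intro m
    induction m with
    | zero =>
      intro x y hxy hgx hfx hgy hfy
      rw [div_le_div_iff₀ hgx hgy]
      nlinarith [hMLR0 x y hxy]
    | succ m ih =>
      intro x y hxy hgx hfx hgy hfy
      have hfmx : 0 < f m x := pos_step m x hgx hfx
      have hfmy : 0 < f m y := pos_step m y hgy hfy
      have h1 : f m x / g x ≤ f m y / g y := ih x y hxy hgx hfmx hgy hfmy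
      have h2 : f (m + 1) x / f m x ≤ f (m + 1) y / f m y := by
        rw [div_le_div_iff₀ hfmx hfmy]
        nlinarith [hMLR m x y hxy]
      have e1 : f (m + 1) x / g x = (f (m + 1) x / f m x) * (f m x / g x) := by
        field_simp
      have e2 : f (m + 1) y / g y = (f (m + 1) y / f m y) * (f m y / g y) := by
        field_simp
      rw [e1, e2]
      exact mul_le_mul h2 h1 (div_nonneg (hf_nonneg m x) hgx.le)
        (div_nonneg (hf_nonneg (m + 1) y) hfmy.le)
  -- zero value off the positivity set
  have hz : ∀ (m : ℕ) (t : ℝ), ¬(0 < g t ∧ 0 < f m t) → Real.log (f m t / g t) = 0 := by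
    intro m t ht
    rcases not_and_or.mp ht with h | h
    · have : g t = 0 := le_antisymm (not_lt.mp h) (hg_nonneg t)
      rw [this, div_zero, Real.log_zero]
    · have : f m t = 0 := le_antisymm (not_lt.mp h) (hf_nonneg m t)
      rw [this, zero_div, Real.log_zero]
  -- the log-likelihood ratio is monotone
  have ell_mono : ∀ m : ℕ, Monotone fun x => Real.log (f m x / g x) := by
    intro m a b hab
    simp only
    by_cases ha : 0 < g a ∧ 0 < f m a <;> by_cases hb : 0 < g b ∧ 0 < f m b
    · exact Real.log_le_log (div_pos ha.2 ha.1)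
        (ratio_mono m a b hab ha.1 ha.2 hb.1 hb.2)
    · rw [hz m b hb]
      by_contra hg0
      push_neg at hg0
      have hmem : Real.log (f m a / g a) / 2 ∈
          Set.Icc (Real.log (f m b / g b)) (Real.log (f m a / g a)) := by
        rw [hz m b hb]
        constructor <;> linarith
      obtain ⟨t, htmem, htv0⟩ :=
        intermediate_value_Icc' hab ((hcont m).continuousOn) hmem
      have htv : Real.log (f m t / g t) = _ := htv0
      by_cases htp : 0 < g t ∧ 0 < f m t
      · have h1 : Real.log (f m a / g a) ≤ Real.log (f m t / g t) :=
          Real.log_le_log (div_pos ha.2 ha.1)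
            (ratio_mono m a t htmem.1 ha.1 ha.2 htp.1 htp.2)
        rw [htv] at h1
        linarith
      · rw [hz m t htp] at htv
        linarith
    · rw [hz m a ha]
      by_contra hg0
      push_neg at hg0
      have hmem : Real.log (f m b / g b) / 2 ∈
          Set.Icc (Real.log (f m b / g b)) (Real.log (f m a / g a)) := by
        rw [hz m a ha]
        constructor <;> linarith
      obtain ⟨t, htmem, htv0⟩ :=
        intermediate_value_Icc' hab ((hcont m).continuousOn) hmem
      have htv : Real.log (f m t / g t) = _ := htv0
      by_cases htp : 0 < g t ∧ 0 < f m t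
      · have h1 : Real.log (f m t / g t) ≤ Real.log (f m b / g b) :=
          Real.log_le_log (div_pos htp.2 htp.1)
            (ratio_mono m t b htmem.2 htp.1 htp.2 hb.1 hb.2)
        rw [htv] at h1
        linarith
      · rw [hz m t htp] at htv
        linarith
    · rw [hz m a ha, hz m b hb]
  -- lintegral normalization
  have hint1 : ∀ m : ℕ, ∫⁻ x, ENNReal.ofReal (f m x) = 1 := by
    intro m
    have hI : Integrable (f m) := by
      by_contra hni
      exact one_ne_zero ((hf_int m).symm.trans (integral_undef hni))
    have h := ofReal_integral_eq_lintegral_ofReal hI (ae_of_all _ (hf_nonneg m))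
    rw [hf_int m] at h
    simpa using h.symm
  intro n hn c
  -- the event set in product space
  set E : Set (Fin (n + 1) → ℝ) :=
    {x | ∑ j : Fin (n + 1), Real.log (f j (x j) / g (x j)) ≤ c} with hEdef
  have hsm : Measurable fun x : Fin (n + 1) → ℝ =>
      ∑ j : Fin (n + 1), Real.log (f j (x j) / g (x j)) :=
    Finset.measurable_sum Finset.univ fun j _ =>
      (hcont j).measurable.comp (measurable_pi_apply j)
  have hEm : MeasurableSet E := measurableSet_le hsm measurable_const
  have hElow : ∀ x ∈ E, ∀ y : Fin (n + 1) → ℝ, (∀ i, y i ≤ x i) → y ∈ E := by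
    intro x hx y hyx
    have hsum : ∑ j : Fin (n + 1), Real.log (f j (y j) / g (y j)) ≤
        ∑ j : Fin (n + 1), Real.log (f j (x j) / g (x j)) :=
      Finset.sum_le_sum fun j _ => ell_mono j (hyx j)
    exact le_trans hsum hx
  -- joint law of the shifted observations is a product measure
  have map_tuple : ∀ κ : ℕ,
      Measure.map (fun ω (j : Fin (n + 1)) => X (κ + j) ω) P =
        Measure.pi (fun j : Fin (n + 1) =>
          volume.withDensity fun x => ENNReal.ofReal (f (κ + j) x)) := by
    intro κ
    have hmt : Measurable fun ω (j : Fin (n + 1)) => X (κ + j) ω :=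
      measurable_pi_lambda _ fun j => hX_meas _
    haveI : ∀ j : Fin (n + 1), IsProbabilityMeasure
        (volume.withDensity fun x => ENNReal.ofReal (f (κ + (j : ℕ)) x)) :=
      fun j => ChgPtAux.wd_prob (hint1 _)
    refine (Measure.pi_eq fun s hs => ?_).symm
    rw [Measure.map_apply hmt (MeasurableSet.univ_pi hs)]
    have hpre : (fun ω (j : Fin (n + 1)) => X (κ + j) ω) ⁻¹' Set.pi Set.univ s =
        ⋂ j : Fin (n + 1), X (κ + j) ⁻¹' s j := by
      ext ω
      simp [Set.mem_pi]
    rw [hpre]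
    -- reindex to a family over ℕ
    set sets : ℕ → Set ℝ := fun i => ⋂ (j : Fin (n + 1)) (_ : κ + (j : ℕ) = i), s j
      with hsetsdef
    have hsets_meas : ∀ i, MeasurableSet (sets i) :=
      fun i => MeasurableSet.iInter fun j => MeasurableSet.iInter fun _ => hs j
    have hsets_eq : ∀ j : Fin (n + 1), sets (κ + (j : ℕ)) = s j := by
      intro j
      ext t
      simp only [hsetsdef, Set.mem_iInter]
      constructor
      · intro h
        exact h j rfl
      · intro ht j' hj'
        have : j' = j := Fin.ext (by omega)
        subst this
        exact ht
    set T : Finset ℕ := Finset.image (fun j : Fin (n + 1) => κ + (j : ℕ)) Finset.univ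
      with hTdef
    have hinj : ∀ a ∈ (Finset.univ : Finset (Fin (n + 1))),
        ∀ b ∈ (Finset.univ : Finset (Fin (n + 1))),
        (fun j : Fin (n + 1) => κ + (j : ℕ)) a = (fun j : Fin (n + 1) => κ + (j : ℕ)) b →
        a = b := by
      intro a _ b _ hab
      simp only at hab
      exact Fin.ext (by omega)
    have hIeq : (⋂ j : Fin (n + 1), X (κ + j) ⁻¹' s j) =
        ⋂ i ∈ T, X i ⁻¹' sets i := by
      ext ω
      simp only [Set.mem_iInter, Set.mem_preimage, hTdef, Finset.mem_image,
        Finset.mem_univ, true_and]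
      constructor
      · rintro h i ⟨j, rfl⟩
        rw [hsets_eq j]
        exact h j
      · intro h j
        have := h (κ + (j : ℕ)) ⟨j, rfl⟩
        rwa [hsets_eq j] at this
    rw [hIeq]
    rw [hindep.measure_inter_preimage_eq_mul T fun i _ => hsets_meas i]
    rw [hTdef, Finset.prod_image hinj]
    refine Finset.prod_congr rfl fun j _ => ?_
    rw [hsets_eq j]
    have := hdens (κ + (j : ℕ))
    rw [HasDensity] at this
    rw [← this, Measure.map_apply (hX_meas _) (hs j)]
  -- express the event probability via the product measure
  have hevent : ∀ κ : ℕ,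
      P {ω | ∑ j ∈ Finset.range (n + 1),
          Real.log (f j (X (κ + j) ω) / g (X (κ + j) ω)) ≤ c} =
        Measure.pi (fun j : Fin (n + 1) =>
          volume.withDensity fun x => ENNReal.ofReal (f (κ + j) x)) E := by
    intro κ
    have hmt : Measurable fun ω (j : Fin (n + 1)) => X (κ + j) ω :=
      measurable_pi_lambda _ fun j => hX_meas _
    have hpre : {ω | ∑ j ∈ Finset.range (n + 1),
        Real.log (f j (X (κ + j) ω) / g (X (κ + j) ω)) ≤ c} =
        (fun ω (j : Fin (n + 1)) => X (κ + j) ω) ⁻¹' E := by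
      ext ω
      simp only [Set.mem_setOf_eq, Set.mem_preimage, hEdef]
      constructor
      · intro hle
        rw [Fin.sum_univ_eq_sum_range
          (fun j => Real.log (f j (X (κ + j) ω) / g (X (κ + j) ω))) (n + 1)]
        exact hle
      · intro hle
        rw [Fin.sum_univ_eq_sum_range
          (fun j => Real.log (f j (X (κ + j) ω) / g (X (κ + j) ω))) (n + 1)] at hle
        exact hle
    rw [hpre, ← Measure.map_apply hmt hEm, map_tuple κ]
  -- antitonicity
  have hanti : Antitone fun κ : ℕ =>
      P {ω | ∑ j ∈ Finset.range (n + 1),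
          Real.log (f j (X (κ + j) ω) / g (X (κ + j) ω)) ≤ c} := by
    refine antitone_nat_of_succ_le fun κ => ?_
    show P {ω | ∑ j ∈ Finset.range (n + 1),
        Real.log (f j (X (κ + 1 + j) ω) / g (X (κ + 1 + j) ω)) ≤ c} ≤
      P {ω | ∑ j ∈ Finset.range (n + 1),
        Real.log (f j (X (κ + j) ω) / g (X (κ + j) ω)) ≤ c}
    rw [hevent κ, hevent (κ + 1)]
    refine ChgPtAux.pi_le (fun j => f (κ + (j : ℕ))) (fun j => f (κ + 1 + (j : ℕ)))
      (fun i => hf_meas _) (fun i => hf_meas _)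
      (fun i x => hf_nonneg _ x) (fun i x => hf_nonneg _ x)
      (fun i => hint1 _) (fun i => hint1 _) ?_ hEm hElow
    intro i x y hxy
    have e : κ + 1 + (i : ℕ) = κ + (i : ℕ) + 1 := by omega
    simp only [e]
    exact hMLR (κ + (i : ℕ)) x y hxy
  refine ⟨hanti, ?_⟩
  have hF0 : P {ω | ∑ j ∈ Finset.range (n + 1),
      Real.log (f j (X (0 + j) ω) / g (X (0 + j) ω)) ≤ c} =
      P {ω | ∑ j ∈ Finset.range (n + 1),
        Real.log (f j (X j ω) / g (X j ω)) ≤ c} := by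
    simp only [zero_add]
  refine le_antisymm ?_ ?_
  · refine le_trans (iSup_le fun κ => hanti (Nat.zero_le κ)) ?_
    exact le_of_eq hF0
  · rw [← hF0]
    exact le_iSup (fun κ : ℕ =>
      P {ω | ∑ j ∈ Finset.range (n + 1),
        Real.log (f j (X (κ + j) ω) / g (X (κ + j) ω)) ≤ c}) 0
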